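/- Let K be a nondegenerate metric continuum such that no countable subset separates K, and let A ⊆ K be a set meeting every Cantor subset of K (half of a Bernstein decomposition). Then A is dense and connected. -/

import Mathlib

open Set Function

/-- A nonempty perfect set in a Polish-like space is uncountable; hence any uncountable
closed set contains a Cantor set homeomorphic copy, so `A` meets it. -/
lemma aux_meets_closed {K : Type*} [MetricSpace K] [CompactSpace K]
    (A : Set K) (hA : ∀ C : Set K, Nonempty (C ≃ₜ (ℕ → Bool)) → (A ∩ C).Nonempty)
    {C : Set K} (hC : IsClosed C) (hunc : ¬C.Countable) : (A ∩ C).Nonempty := by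
  have : PolishSpace K := inferInstance
  obtain ⟨f, hfC, hfc, hfi⟩ := hC.exists_nat_bool_injection_of_not_countable hunc
  have hcont : Continuous fun x : ℕ → Bool => (⟨f x, mem_range_self x⟩ : range f) :=
    hfc.subtype_mk _
  let e : (ℕ → Bool) ≃ range f := Equiv.ofInjective f hfi
  have he : Continuous e := hcont
  let h : (ℕ → Bool) ≃ₜ range f := he.homeoOfEquivCompactToT2
  obtain ⟨x, hxA, hxr⟩ := hA (range f) ⟨h.symm⟩
  exact ⟨x, hxA, hfC hxr⟩

lemma aux_perfect_uncountable {K : Type*} [MetricSpace K] [CompactSpace K]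
    {C : Set K} (hC : Perfect C) (hne : C.Nonempty) : ¬C.Countable := by
  have : PolishSpace K := inferInstance
  have := TopologicalSpace.upgradeIsCompletelyMetrizable K
  obtain ⟨f, hfr, hfc, hfi⟩ := hC.exists_nat_bool_injection hne
  intro hcnt
  have h1 : (range f).Countable := hcnt.mono hfr
  have h2 : Countable (ℕ → Bool) := by
    have := h1.to_subtype
    exact (Equiv.ofInjective f hfi).countable_iff.mpr this
  obtain ⟨g, hg⟩ := exists_surjective_nat (ℕ → Bool)
  obtain ⟨n, hn⟩ := hg fun n => !(g n n)
  have := congrFun hn n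
  simp at this

theorem bernstein_half_dense_connected {K : Type*}
    [MetricSpace K] [CompactSpace K] [ConnectedSpace K] [Nontrivial K]
    (hsep : ∀ S : Set K, S.Countable → IsPreconnected Sᶜ)
    (A : Set K)
    (hA : ∀ C : Set K, Nonempty (C ≃ₜ (ℕ → Bool)) → (A ∩ C).Nonempty) :
    Dense A ∧ IsConnected A := by
  -- every closed set disjoint from A is countable
  have hclosed : ∀ C : Set K, IsClosed C → Disjoint A C → C.Countable := by
    intro C hC hd
    by_contra hunc
    obtain ⟨x, hxA, hxC⟩ := aux_meets_closed A hA hC hunc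
    exact hd.ne_of_mem hxA hxC rfl
  -- K has no isolated points
  have hpre : Preperfect (univ : Set K) :=
    isPreconnected_univ.preperfect_of_nontrivial nontrivial_univ
  -- density
  have hdense : Dense A := by
    rw [dense_iff_inter_open]
    intro U hU hUne
    by_contra hempty
    obtain ⟨x, hx⟩ := hUne
    obtain ⟨r, hr, hball⟩ := Metric.mem_nhds_iff.mp (hU.mem_nhds hx)
    have hsub : closure (Metric.ball x (r / 2)) ⊆ U := by
      refine subset_trans (subset_trans Metric.closure_ball_subset_closedBall
        (Metric.closedBall_subset_ball (by linarith))) hball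
    have hperf : Perfect (closure (Metric.ball x (r / 2))) := by
      have h1 : Preperfect (Metric.ball x (r / 2)) := by
        have := hpre.open_inter (U := Metric.ball x (r/2)) Metric.isOpen_ball
        simpa using this
      exact h1.perfect_closure
    have hne : (closure (Metric.ball x (r / 2))).Nonempty :=
      ⟨x, subset_closure (Metric.mem_ball_self (by linarith))⟩
    obtain ⟨y, hyA, hyU⟩ := aux_meets_closed A hA isClosed_closure
      (aux_perfect_uncountable hperf hne)
    exact hempty ⟨y, hsub hyU, hyA⟩
  refine ⟨hdense, ?_, ?_⟩
  · -- A nonempty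
    have huniv : ¬(univ : Set K).Countable := by
      have : Perfect (univ : Set K) := ⟨isClosed_univ, hpre⟩
      exact aux_perfect_uncountable this univ_nonempty
    obtain ⟨y, hyA, _⟩ := aux_meets_closed A hA isClosed_univ huniv
    exact ⟨y, hyA⟩
  · -- preconnected
    intro u v hu hv hsuv hsu hsv
    by_contra hcon
    have hAuv : A ∩ (u ∩ v) = ∅ := not_nonempty_iff_eq_empty.mp hcon
    -- A ∩ u and A ∩ v are separated
    have h1 : Disjoint (closure (A ∩ u)) (A ∩ v) := by
      rw [Set.disjoint_left]
      intro z hz hzv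
      obtain ⟨w, hw1, hw2⟩ := mem_closure_iff.mp hz v hv hzv.2
      have : w ∈ A ∩ (u ∩ v) := ⟨hw2.1, hw2.2, hw1⟩
      simp [hAuv] at this
    have h2 : Disjoint (A ∩ u) (closure (A ∩ v)) := by
      rw [Set.disjoint_left]
      intro z hzu hz
      obtain ⟨w, hw1, hw2⟩ := mem_closure_iff.mp hz u hu hzu.2
      have : w ∈ A ∩ (u ∩ v) := ⟨hw2.1, hw1, hw2.2⟩
      simp [hAuv] at this
    -- build disjoint open neighborhoods via infEdist
    set E : Set K := {z | EMetric.infEdist z (A ∩ u) < EMetric.infEdist z (A ∩ v)} with hEdef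
    set F : Set K := {z | EMetric.infEdist z (A ∩ v) < EMetric.infEdist z (A ∩ u)} with hFdef
    have hE : IsOpen E := isOpen_lt EMetric.continuous_infEdist EMetric.continuous_infEdist
    have hF : IsOpen F := isOpen_lt EMetric.continuous_infEdist EMetric.continuous_infEdist
    have hAE : A ∩ u ⊆ E := by
      intro z hz
      have hz0 : EMetric.infEdist z (A ∩ u) = 0 := EMetric.infEdist_zero_of_mem hz
      have hzt : z ∉ closure (A ∩ v) := fun hc => h2.ne_of_mem hz hc rfl
      have : EMetric.infEdist z (A ∩ v) ≠ 0 := fun h0 =>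
        hzt (EMetric.mem_closure_iff_infEdist_zero.mpr h0)
      simpa [hEdef, hz0] using pos_iff_ne_zero.mpr this
    have hAF : A ∩ v ⊆ F := by
      intro z hz
      have hz0 : EMetric.infEdist z (A ∩ v) = 0 := EMetric.infEdist_zero_of_mem hz
      have hzt : z ∉ closure (A ∩ u) := fun hc => h1.ne_of_mem hc hz rfl
      have : EMetric.infEdist z (A ∩ u) ≠ 0 := fun h0 =>
        hzt (EMetric.mem_closure_iff_infEdist_zero.mpr h0)
      simpa [hFdef, hz0] using pos_iff_ne_zero.mpr this
    have hEF : Disjoint E F := by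
      rw [Set.disjoint_left]
      intro z hzE hzF
      have a1 : EMetric.infEdist z (A ∩ u) < EMetric.infEdist z (A ∩ v) := hzE
      have a2 : EMetric.infEdist z (A ∩ v) < EMetric.infEdist z (A ∩ u) := hzF
      exact lt_asymm a1 a2
    have hAEF : A ⊆ E ∪ F := by
      intro z hz
      rcases hsuv hz with h | h
      · exact Or.inl (hAE ⟨hz, h⟩)
      · exact Or.inr (hAF ⟨hz, h⟩)
    have hScnt : ((E ∪ F)ᶜ : Set K).Countable := by
      apply hclosed _ (hE.union hF).isClosed_compl
      exact Set.disjoint_left.mpr fun z hzA hzc => hzc (hAEF hzA)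
    have hpc := hsep _ hScnt
    rw [compl_compl] at hpc
    obtain ⟨z, _, hzE, hzF⟩ := hpc E F hE hF subset_rfl
      (hsu.mono fun z hz => ⟨Or.inl (hAE hz), hAE hz⟩)
      (hsv.mono fun z hz => ⟨Or.inr (hAF hz), hAF hz⟩)
    exact hEF.ne_of_mem hzE hzF rfl
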